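/- Let n = 4, h a non-degenerate diagonalizable σ-hermitian form on F⁴ of positive Witt index whose discriminant is 1 (i.e., det of a Gram matrix is a norm σ(c)c). Then h has Witt index exactly 2. -/

import Mathlib

open Module Matrix

/-- package the functional `x ↦ h u x` as a linear map -/
def hermFun {F V : Type*} [Field F] [AddCommGroup V] [Module F V]
    (h : V → V → F) (u : V)
    (h_add_right : ∀ u w w', h u (w + w') = h u w + h u w')
    (h_smul_right : ∀ (s : F) (u w : V), h u (s • w) = s * h u w) : V →ₗ[F] F where
  toFun := h u
  map_add' := h_add_right u
  map_smul' := fun s y => by simpa using h_smul_right s u y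

@[simp] lemma hermFun_apply {F V : Type*} [Field F] [AddCommGroup V] [Module F V]
    (h : V → V → F) (u : V) (har) (hsr) (x : V) :
    hermFun h u har hsr x = h u x := rfl


lemma det_aux4 {R : Type*} [CommRing R] (A : Matrix (Fin 4) (Fin 4) R) (d a b : R)
    (h00 : A 0 0 = 0) (h01 : A 0 1 = 1) (h02 : A 0 2 = 0) (h03 : A 0 3 = 0)
    (h10 : A 1 0 = 1) (h11 : A 1 1 = d) (h12 : A 1 2 = 0) (h13 : A 1 3 = 0)
    (h20 : A 2 0 = 0) (h21 : A 2 1 = 0) (h22 : A 2 2 = a) (h23 : A 2 3 = 0)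
    (h30 : A 3 0 = 0) (h31 : A 3 1 = 0) (h32 : A 3 2 = 0) (h33 : A 3 3 = b) :
    A.det = -(a * b) := by
  rw [Matrix.det_succ_row_zero]
  simp [Fin.sum_univ_succ, Matrix.det_fin_three, Fin.succAbove,
    show (Fin.succ (2 : Fin 3)) = (3 : Fin 4) from rfl,
    show (Fin.castSucc (2 : Fin 3)) = (2 : Fin 4) from rfl,
    show (Fin.succ (1 : Fin 3)) = (2 : Fin 4) from rfl,
    show (Fin.castSucc (1 : Fin 3)) = (1 : Fin 4) from rfl,
    show (Fin.succ (0 : Fin 3)) = (1 : Fin 4) from rfl,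
    show (Fin.castSucc (0 : Fin 3)) = (0 : Fin 4) from rfl,
    h00, h01, h02, h03, h10, h11, h12, h13, h20, h21, h22, h23, h30, h31, h32, h33]

/-- a non-degenerate diagonalizable σ-hermitian form on a 4-dimensional
space with positive Witt index and discriminant 1 (the determinant of a Gram matrix is
a norm `σ(c)·c`) has Witt index exactly 2. -/
theorem witt_index_two_of_disc_one
    {F V : Type*} [Field F] [AddCommGroup V] [Module F V] [FiniteDimensional F V]
    (σ : F ≃+* F) (hσ : ∀ a, σ (σ a) = a)
    (hfr : Module.finrank F V = 4)
    (h : V → V → F)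
    (h_add_left : ∀ u u' w, h (u + u') w = h u w + h u' w)
    (h_add_right : ∀ u w w', h u (w + w') = h u w + h u w')
    (h_smul_left : ∀ (s : F) u w, h (s • u) w = σ s * h u w)
    (h_smul_right : ∀ (s : F) u w, h u (s • w) = s * h u w)
    (h_herm : ∀ u w, h w u = σ (h u w))
    (h_nondeg : ∀ u, (∀ w, h u w = 0) → u = 0)
    (v : Basis (Fin 4) F V)
    (h_orth : ∀ i j, i ≠ j → h (v i) (v j) = 0)
    -- the discriminant of h is 1: det of the Gram matrix is a nonzero norm
    (hdisc : ∃ c : F, c ≠ 0 ∧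
        Matrix.det (Matrix.of fun i j : Fin 4 => h (v i) (v j)) = σ c * c)
    -- h has positive Witt index: there is a nonzero isotropic vector
    (hiso : ∃ u : V, u ≠ 0 ∧ h u u = 0) :
    -- there is a 2-dimensional totally isotropic subspace …
    (∃ W : Submodule F V, Module.finrank F W = 2 ∧
        ∀ x ∈ W, ∀ y ∈ W, h x y = 0) ∧
    -- … and every totally isotropic subspace has dimension at most 2
    (∀ W : Submodule F V, (∀ x ∈ W, ∀ y ∈ W, h x y = 0) →
        Module.finrank F W ≤ 2) := by
  classical
  obtain ⟨c, hc0, hcdet⟩ := hdisc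
  obtain ⟨u, hu0, huu⟩ := hiso
  have hσ0 : ∀ s : F, σ s = 0 → s = 0 := fun s hs => by
    have := hσ s; rw [hs, _root_.map_zero] at this; exact this.symm
  have h0r : ∀ x : V, h x 0 = 0 := fun x => by
    have := h_smul_right 0 x 0; rw [zero_smul] at this; rw [this, zero_mul]
  have h0l : ∀ x : V, h 0 x = 0 := fun x => by
    have := h_smul_left 0 0 x; rw [zero_smul] at this; rw [this, _root_.map_zero, zero_mul]
  have hsubr : ∀ x y z : V, h x (y - z) = h x y - h x z := fun x y z => by
    rw [sub_eq_add_neg, ← neg_one_smul F z, h_add_right, h_smul_right]; ring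
  have hsuml : ∀ {ι : Type} (s : Finset ι) (f : ι → V) (y : V),
      h (∑ i ∈ s, f i) y = ∑ i ∈ s, h (f i) y := by
    intro ι s f y
    induction s using Finset.cons_induction with
    | empty => simpa using h0l y
    | cons i s his ih => rw [Finset.sum_cons, h_add_left, ih, Finset.sum_cons]
  have hsumr : ∀ {ι : Type} (s : Finset ι) (f : ι → V) (y : V),
      h y (∑ i ∈ s, f i) = ∑ i ∈ s, h y (f i) := by
    intro ι s f y
    induction s using Finset.cons_induction with
    | empty => simpa using h0r y
    | cons i s his ih => rw [Finset.sum_cons, h_add_right, ih, Finset.sum_cons]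
  -- the upper bound
  have upper : ∀ W : Submodule F V, (∀ x ∈ W, ∀ y ∈ W, h x y = 0) →
      Module.finrank F W ≤ 2 := by
    intro W hW
    by_contra hgt
    push_neg at hgt
    have h3 : 3 ≤ finrank F W := hgt
    have bW : Basis (Fin (finrank F W)) F W := Module.finBasis F W
    set g : Fin 3 → V := fun i => (bW (Fin.castLE h3 i) : V) with hg
    have hg_mem : ∀ i, g i ∈ W := fun i => (bW (Fin.castLE h3 i)).2
    have hg_li : LinearIndependent F g := by
      have h1 : LinearIndependent F fun i : Fin 3 => bW (Fin.castLE h3 i) :=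
        bW.linearIndependent.comp _ (Fin.castLE_injective h3)
      exact h1.map' W.subtype W.ker_subtype
    set f : Fin 3 → Module.Dual F V :=
      fun i => hermFun h (g i) h_add_right h_smul_right with hf
    have hf_ann : ∀ i, f i ∈ W.dualAnnihilator := fun i =>
      (Submodule.mem_dualAnnihilator _).mpr fun x hx => hW (g i) (hg_mem i) x hx
    have hf_li : LinearIndependent F f := by
      rw [Fintype.linearIndependent_iff]
      intro cc hcc i
      have hx : ∀ x : V, ∑ j, cc j * h (g j) x = 0 := fun x => by
        have := LinearMap.congr_fun hcc x
        simpa [hf] using this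
      have h2 : ∀ x, h (∑ j, σ (cc j) • g j) x = 0 := fun x => by
        rw [hsuml]
        rw [Finset.sum_congr rfl fun j _ => by rw [h_smul_left, hσ]]
        exact hx x
      have h4 := Fintype.linearIndependent_iff.mp hg_li (fun j => σ (cc j))
        (h_nondeg _ h2) i
      exact hσ0 _ h4
    have hspan_le : Submodule.span F (Set.range f) ≤ W.dualAnnihilator :=
      Submodule.span_le.mpr (Set.range_subset_iff.mpr hf_ann)
    have h5 : 3 ≤ finrank F W.dualAnnihilator := by
      have := Submodule.finrank_mono hspan_le
      rw [finrank_span_eq_card hf_li] at this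
      simpa using this
    have h6 : finrank F (V ⧸ W) = finrank F W.dualAnnihilator :=
      (Subspace.quotEquivAnnihilator W).finrank_eq
    have h7 := Submodule.finrank_quotient_add_finrank W
    rw [hfr] at h7
    omega
  -- existence
  obtain ⟨z0, hz0⟩ : ∃ w, h u w ≠ 0 := by
    by_contra hcon; push_neg at hcon; exact hu0 (h_nondeg u hcon)
  obtain ⟨z, huz⟩ : ∃ z, h u z = 1 :=
    ⟨(h u z0)⁻¹ • z0, by rw [h_smul_right, inv_mul_cancel₀ hz0]⟩
  have hzu : h z u = 1 := by rw [h_herm, huz, _root_.map_one]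
  -- the builder
  have build : ∀ q : V, q ≠ 0 → h u q = 0 → h z q = 0 → h q q = 0 →
      ∃ W : Submodule F V, Module.finrank F W = 2 ∧ ∀ x ∈ W, ∀ y ∈ W, h x y = 0 := by
    intro q hq0 huq hzq hqq
    have hqu : h q u = 0 := by rw [h_herm, huq, _root_.map_zero]
    have hqz : h q z = 0 := by rw [h_herm, hzq, _root_.map_zero]
    have hli : LinearIndependent F ![u, q] := by
      rw [LinearIndependent.pair_iff]
      intro s t hst
      have h1 : h (s • u + t • q) z = 0 := by rw [hst, h0l]
      rw [h_add_left, h_smul_left, h_smul_left, huz, hqz, mul_one, mul_zero,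
        add_zero] at h1
      have hs : s = 0 := hσ0 s h1
      refine ⟨hs, ?_⟩
      rw [hs, zero_smul, zero_add] at hst
      exact (smul_eq_zero.mp hst).resolve_right hq0
    refine ⟨Submodule.span F (Set.range ![u, q]), ?_, ?_⟩
    · rw [finrank_span_eq_card hli]; simp
    · intro x hx y hy
      rw [Submodule.mem_span_range_iff_exists_fun] at hx hy
      obtain ⟨cx, hcx⟩ := hx
      obtain ⟨cy, hcy⟩ := hy
      rw [← hcx, ← hcy]
      simp [Fin.sum_univ_two, h_add_left, h_add_right, h_smul_left, h_smul_right,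
        huu, huq, hqu, hqq]
  -- the kernel of pairing against u and z
  set Φ : V →ₗ[F] F × F := (hermFun h u h_add_right h_smul_right).prod
      (hermFun h z h_add_right h_smul_right) with hΦ
  have hmemK : ∀ x, x ∈ LinearMap.ker Φ ↔ (h u x = 0 ∧ h z x = 0) := fun x => by
    simp [hΦ, LinearMap.mem_ker, Prod.ext_iff]
  have hker2 : 2 ≤ finrank F (LinearMap.ker Φ) := by
    have h1 := LinearMap.finrank_range_add_finrank_ker Φ
    have h2 : finrank F (LinearMap.range Φ) ≤ 2 := by
      have := Submodule.finrank_le (LinearMap.range Φ)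
      simpa using this
    rw [hfr] at h1
    omega
  obtain ⟨w1, hw1K, hw10⟩ := Submodule.exists_mem_ne_zero_of_ne_bot
    (p := LinearMap.ker Φ) (by
      intro hbot
      rw [hbot] at hker2
      simp at hker2)
  obtain ⟨huw1, hzw1⟩ := (hmemK w1).mp hw1K
  have hnle : ¬ (LinearMap.ker Φ ≤ Submodule.span F {w1}) := by
    intro hle
    have h1 := Submodule.finrank_mono hle
    rw [finrank_span_singleton hw10] at h1
    omega
  obtain ⟨w, hwK, hw_nospan⟩ := SetLike.not_le_iff_exists.mp hnle
  obtain ⟨huw, hzw⟩ := (hmemK w).mp hwK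
  have hw1u : h w1 u = 0 := by rw [h_herm, huw1, _root_.map_zero]
  have hw1z : h w1 z = 0 := by rw [h_herm, hzw1, _root_.map_zero]
  rcases eq_or_ne (h w1 w1) 0 with ha | ha
  · exact ⟨build w1 hw10 huw1 hzw1 ha, upper⟩
  -- orthogonalize w against w1
  set t : F := (h w1 w1)⁻¹ * h w1 w with ht
  set w2 : V := w - t • w1 with hw2
  have hw20 : w2 ≠ 0 := by
    intro h0
    apply hw_nospan
    have : w = t • w1 := by
      have := sub_eq_zero.mp h0
      rw [hw2] at h0
      have := sub_eq_zero.mp h0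
      exact this
    rw [this]
    exact Submodule.mem_span_singleton.mpr ⟨t, rfl⟩
  have hw1w2 : h w1 w2 = 0 := by
    rw [hw2, hsubr, h_smul_right, ht]
    field_simp
    ring
  have hw2w1 : h w2 w1 = 0 := by rw [h_herm, hw1w2, _root_.map_zero]
  have huw2 : h u w2 = 0 := by
    rw [hw2, hsubr, h_smul_right, huw, huw1, mul_zero, sub_zero]
  have hzw2 : h z w2 = 0 := by
    rw [hw2, hsubr, h_smul_right, hzw, hzw1, mul_zero, sub_zero]
  have hw2u : h w2 u = 0 := by rw [h_herm, huw2, _root_.map_zero]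
  have hw2z : h w2 z = 0 := by rw [h_herm, hzw2, _root_.map_zero]
  rcases eq_or_ne (h w2 w2) 0 with hb | hb
  · exact ⟨build w2 hw20 huw2 hzw2 hb, upper⟩
  -- the determinant argument
  set b4 : Fin 4 → V := ![u, z, w1, w2] with hb4
  set G : Matrix (Fin 4) (Fin 4) F := Matrix.of (fun i j => h (v i) (v j)) with hG
  set M : Matrix (Fin 4) (Fin 4) F := Matrix.of (fun i k => v.repr (b4 k) i) with hM
  have hbk : ∀ k : Fin 4, b4 k = ∑ i, M i k • v i := fun k => by
    rw [hM]
    simpa using (v.sum_repr (b4 k)).symm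
  have hGram : ∀ k l, ((M.map ⇑σ)ᵀ * G * M) k l = h (b4 k) (b4 l) := by
    intro k l
    have hR : h (b4 k) (b4 l) = ∑ i, ∑ j, σ (M i k) * (M j l * G i j) := by
      conv_lhs => rw [hbk k, hbk l]
      rw [hsuml]
      refine Finset.sum_congr rfl fun i _ => ?_
      rw [h_smul_left, hsumr, Finset.mul_sum]
      refine Finset.sum_congr rfl fun j _ => ?_
      rw [h_smul_right, hG]
      simp
    rw [hR, Matrix.mul_apply, ← Finset.sum_comm]
    refine Finset.sum_congr rfl fun j _ => ?_
    rw [Matrix.mul_apply, Finset.sum_mul]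
    refine Finset.sum_congr rfl fun i _ => ?_
    simp only [Matrix.transpose_apply, Matrix.map_apply]
    ring
  have hb40 : b4 0 = u := rfl
  have hb41 : b4 1 = z := rfl
  have hb42 : b4 2 = w1 := rfl
  have hb43 : b4 3 = w2 := rfl
  have hdet2 : ((M.map ⇑σ)ᵀ * G * M).det = -(h w1 w1 * h w2 w2) :=
    det_aux4 _ (h z z) _ _
      ((hGram 0 0).trans huu) ((hGram 0 1).trans huz)
      ((hGram 0 2).trans huw1) ((hGram 0 3).trans huw2)
      ((hGram 1 0).trans hzu) ((hGram 1 1).trans rfl)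
      ((hGram 1 2).trans hzw1) ((hGram 1 3).trans hzw2)
      ((hGram 2 0).trans hw1u) ((hGram 2 1).trans hw1z)
      ((hGram 2 2).trans rfl) ((hGram 2 3).trans hw1w2)
      ((hGram 3 0).trans hw2u) ((hGram 3 1).trans hw2z)
      ((hGram 3 2).trans hw2w1) ((hGram 3 3).trans rfl)
  have hdet1 : ((M.map ⇑σ)ᵀ * G * M).det = σ M.det * (σ c * c) * M.det := by
    rw [Matrix.det_mul, Matrix.det_mul, Matrix.det_transpose]
    have hms : σ M.det = (M.map ⇑σ).det := by
      rw [RingEquiv.map_det σ M, RingEquiv.mapMatrix_apply]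
    rw [← hms, hG, hcdet]
  have hkey : σ (M.det * c) * (M.det * c) = -(h w1 w1 * h w2 w2) := by
    rw [_root_.map_mul]
    linear_combination hdet2 - hdet1
  -- build the isotropic vector in the complement
  have hafix : σ (h w1 w1) = h w1 w1 := (h_herm w1 w1).symm
  set s : F := (M.det * c) * (h w1 w1)⁻¹ with hs
  set q : V := s • w1 + w2 with hq
  have hσinv : σ (h w1 w1)⁻¹ = (h w1 w1)⁻¹ := by
    rw [_root_.map_inv₀, hafix]
  have hqq : h q q = 0 := by
    have hσs : σ s = σ (M.det * c) * (h w1 w1)⁻¹ := by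
      rw [hs, _root_.map_mul, hσinv]
    rw [hq, h_add_left, h_smul_left, h_add_right, h_add_right, h_smul_right,
      h_smul_right, hw1w2, hw2w1, hσs, hs]
    rw [add_zero, mul_zero, zero_add, inv_mul_cancel_right₀ ha]
    have hre : σ (M.det * c) * (h w1 w1)⁻¹ * (M.det * c)
        = (h w1 w1)⁻¹ * (σ (M.det * c) * (M.det * c)) := by ring
    rw [hre, hkey]
    field_simp
    ring
  have huq : h u q = 0 := by
    rw [hq, h_add_right, h_smul_right, huw1, huw2, mul_zero, add_zero]
  have hzq : h z q = 0 := by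
    rw [hq, h_add_right, h_smul_right, hzw1, hzw2, mul_zero, add_zero]
  have hq0 : q ≠ 0 := by
    intro h0
    apply hw_nospan
    have he : w - (t - s) • w1 = s • w1 + w2 := by
      rw [hw2, sub_smul]; abel
    have : w = (t - s) • w1 := by
      rw [← sub_eq_zero, he, ← hq, h0]
    rw [this]
    exact Submodule.mem_span_singleton.mpr ⟨t - s, rfl⟩
  exact ⟨build q hq0 huq hzq hqq, upper⟩
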